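/- Set β_k := 2/(α_k(1−γ)) for k = 1,2, and let ψ be as in the context. There exist c₆ > 0 and L₀ > 1 such that for every L ≥ L₀ and every Borel measure ν on ℝ^d with ν(Λ_j) ≤ 1 for all j ∈ ℤ^d the following holds: setting Λ̃ := ⋃_{j=(j₁,j₂)∈ℤ^d, 2L^{β₁} < |j₁| ≤ 4L^{β₁} and 2L^{β₂} < |j₂| ≤ 4L^{β₂}} Λ_j and V_{ν,L}(x) := ∫_{{y : |y₁| > L^{β₁} and |y₂| > L^{β₂}}} f(x − y) ν(dy), one has ∫_{Λ₀} V_{ν,L}(x) ψ(x)² dx ≥ c₆ · L^{−2/(1−γ)} · ν(Λ̃). -/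

import Mathlib

open MeasureTheory ENNReal

noncomputable section

/-- The half-open unit cube `Λ_j = j + [-1/2, 1/2)^d` centred at the lattice point `j`. -/
def cube (d : ℕ) (j : Fin d → ℤ) : Set (Fin d → ℝ) :=
  {x | ∀ i, (j i : ℝ) - 1/2 ≤ x i ∧ x i < (j i : ℝ) + 1/2}

/-- The unit cube in the product space `ℝ^{d₁} × ℝ^{d₂}` centred at the lattice point `j`. -/
def cubeP (d₁ d₂ : ℕ) (j : (Fin d₁ → ℤ) × (Fin d₂ → ℤ)) :
    Set ((Fin d₁ → ℝ) × (Fin d₂ → ℝ)) :=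
  (cube d₁ j.1) ×ˢ (cube d₂ j.2)

/-- The lattice point `j ∈ ℤ^{d₁} × ℤ^{d₂}` viewed as a vector of `ℝ^{d₁} × ℝ^{d₂}`. -/
def latVecP (d₁ d₂ : ℕ) (j : (Fin d₁ → ℤ) × (Fin d₂ → ℤ)) :
    (Fin d₁ → ℝ) × (Fin d₂ → ℝ) :=
  (fun i => (j.1 i : ℝ), fun i => (j.2 i : ℝ))

lemma norm_intCast_pi {d : ℕ} (j : Fin d → ℤ) : ‖(fun i => (j i : ℝ))‖ = ‖j‖ := by
  simp only [Pi.norm_def]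
  congr 1

lemma cube_dist {d : ℕ} {j : Fin d → ℤ} {y : Fin d → ℝ} (hy : y ∈ cube d j) :
    ‖y - (fun i => (j i : ℝ))‖ ≤ 1/2 := by
  refine (pi_norm_le_iff_of_nonneg (by norm_num)).2 fun i => ?_
  have h := hy i
  rw [Pi.sub_apply, Real.norm_eq_abs, abs_le]
  constructor <;> [linarith [h.1]; linarith [h.2]]

lemma cube_norm_bounds {d : ℕ} {j : Fin d → ℤ} {y : Fin d → ℝ} (hy : y ∈ cube d j) :
    ‖j‖ - 1/2 ≤ ‖y‖ ∧ ‖y‖ ≤ ‖j‖ + 1/2 := by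
  have hd := cube_dist hy
  have e := norm_intCast_pi j
  set c : Fin d → ℝ := fun i => (j i : ℝ)
  have h1 : ‖c‖ - ‖y‖ ≤ ‖c - y‖ := norm_sub_norm_le _ _
  have h2 : ‖y‖ - ‖c‖ ≤ ‖y - c‖ := norm_sub_norm_le _ _
  rw [norm_sub_rev] at h1
  constructor <;> linarith

lemma measurableSet_cube {d : ℕ} (j : Fin d → ℤ) : MeasurableSet (cube d j) := by
  have : cube d j = Set.pi Set.univ (fun i => Set.Ico ((j i : ℝ) - 1/2) ((j i : ℝ) + 1/2)) := by
    ext x; simp [cube, Set.mem_pi, Set.mem_Ico]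
  rw [this]
  exact MeasurableSet.pi Set.countable_univ fun i _ => measurableSet_Ico

lemma measurableSet_cubeP {d₁ d₂ : ℕ} (j : (Fin d₁ → ℤ) × (Fin d₂ → ℤ)) :
    MeasurableSet (cubeP d₁ d₂ j) :=
  (measurableSet_cube _).prod (measurableSet_cube _)

/-- with `β_k = 2/(α_k(1-γ))`, the annulus
`Λ̃ = ⋃ {Λ_j : 2L^{β₁} < |j₁| ≤ 4L^{β₁}, 2L^{β₂} < |j₂| ≤ 4L^{β₂}}` and
`V_{ν,L}(x) = ∫_{|y₁| > L^{β₁}, |y₂| > L^{β₂}} f(x-y) ν(dy)`, one has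
`∫_{Λ₀} V_{ν,L} ψ² ≥ c₆ L^{-2/(1-γ)} ν(Λ̃)` for all `L ≥ L₀` and all `ν` with
`ν(Λ_j) ≤ 1`. -/
theorem statement11 (d₁ d₂ : ℕ) (hd₁ : 0 < d₁) (hd₂ : 0 < d₂)
    (f : (Fin d₁ → ℝ) × (Fin d₂ → ℝ) → ℝ)
    (hf_meas : Measurable f) (hf_nonneg : ∀ x, 0 ≤ f x)
    (α₁ α₂ : ℝ) (hα₁ : 0 < α₁) (hα₂ : 0 < α₂)
    (hγ : (d₁ : ℝ) / α₁ + (d₂ : ℝ) / α₂ < 1)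
    (f_u f₀ r₀ : ℝ) (hfu : 0 < f_u) (hf₀ : 0 < f₀) (hr₀ : 0 < r₀)
    (h_low : ∀ x : (Fin d₁ → ℝ) × (Fin d₂ → ℝ), r₀ ≤ max ‖x.1‖ ‖x.2‖ →
      ENNReal.ofReal (f_u / (‖x.1‖ ^ α₁ + ‖x.2‖ ^ α₂)) ≤
        ∫⁻ y in cubeP d₁ d₂ 0, ENNReal.ofReal (f (y - x)))
    (h_upp : ∀ x : (Fin d₁ → ℝ) × (Fin d₂ → ℝ), r₀ ≤ max ‖x.1‖ ‖x.2‖ →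
      f x ≤ f₀ / (‖x.1‖ ^ α₁ + ‖x.2‖ ^ α₂))
    (ψ : (Fin d₁ → ℝ) × (Fin d₂ → ℝ) → ℝ) (hψ_meas : Measurable ψ)
    (hψ_pos : ∀ x, 0 < ψ x)
    (hψ_per : ∀ x j, ψ (x + latVecP d₁ d₂ j) = ψ x)
    (s : ℝ) (hs : 0 < s) (hψ_inf : ∀ x ∈ cubeP d₁ d₂ 0, s ≤ ψ x ^ 2)
    (β₁ β₂ : ℝ)
    (hβ₁ : β₁ = 2 / (α₁ * (1 - ((d₁ : ℝ) / α₁ + (d₂ : ℝ) / α₂))))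
    (hβ₂ : β₂ = 2 / (α₂ * (1 - ((d₁ : ℝ) / α₁ + (d₂ : ℝ) / α₂)))) :
    ∃ c₆ L₀ : ℝ, 0 < c₆ ∧ 1 < L₀ ∧
      ∀ L : ℝ, L₀ ≤ L →
      ∀ ν : Measure ((Fin d₁ → ℝ) × (Fin d₂ → ℝ)),
        (∀ j, ν (cubeP d₁ d₂ j) ≤ 1) →
        ENNReal.ofReal (c₆ *
            L ^ (-(2 / (1 - ((d₁ : ℝ) / α₁ + (d₂ : ℝ) / α₂))))) *
          ν (⋃ j ∈ {j : (Fin d₁ → ℤ) × (Fin d₂ → ℤ) |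
              (2 * L ^ β₁ < ‖j.1‖ ∧ ‖j.1‖ ≤ 4 * L ^ β₁) ∧
              (2 * L ^ β₂ < ‖j.2‖ ∧ ‖j.2‖ ≤ 4 * L ^ β₂)}, cubeP d₁ d₂ j) ≤
        ∫⁻ x in cubeP d₁ d₂ 0,
          (∫⁻ y in {y : (Fin d₁ → ℝ) × (Fin d₂ → ℝ) |
              L ^ β₁ < ‖y.1‖ ∧ L ^ β₂ < ‖y.2‖},
              ENNReal.ofReal (f (x - y)) ∂ν) * ENNReal.ofReal (ψ x ^ 2) := by
  have h1γ : 0 < 1 - ((d₁ : ℝ) / α₁ + (d₂ : ℝ) / α₂) := sub_pos.2 hγ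
  set γ : ℝ := (d₁ : ℝ) / α₁ + (d₂ : ℝ) / α₂ with hγdef
  set E : ℝ := 2 / (1 - γ) with hEdef
  have hEpos : 0 < E := by positivity
  have hβ₁pos : 0 < β₁ := by rw [hβ₁]; positivity
  have hβ₂pos : 0 < β₂ := by rw [hβ₂]; positivity
  have hβ₁E : β₁ * α₁ = E := by
    rw [hβ₁, hEdef]; field_simp
  have hβ₂E : β₂ * α₂ = E := by
    rw [hβ₂, hEdef]; field_simp
  set C : ℝ := (5 : ℝ) ^ α₁ + (5 : ℝ) ^ α₂ with hCdef
  have hC : 0 < C := by positivity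
  have hr₁ : (0:ℝ) < r₀ ^ (1/β₁) := Real.rpow_pos_of_pos hr₀ _
  have hr₂ : (0:ℝ) < r₀ ^ (1/β₂) := Real.rpow_pos_of_pos hr₀ _
  refine ⟨s * f_u / C, 2 + r₀ ^ (1/β₁) + r₀ ^ (1/β₂), by positivity, by linarith, ?_⟩
  intro L hL ν hν
  have hL2 : (2:ℝ) ≤ L := by linarith
  have hL0 : (0:ℝ) < L := by linarith
  have hL1 : (1:ℝ) ≤ L := by linarith
  have hLβ₁1 : (1:ℝ) ≤ L ^ β₁ := Real.one_le_rpow hL1 hβ₁pos.le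
  have hLβ₂1 : (1:ℝ) ≤ L ^ β₂ := Real.one_le_rpow hL1 hβ₂pos.le
  have hLβ₁r : r₀ ≤ L ^ β₁ := by
    calc r₀ = (r₀ ^ (1/β₁)) ^ β₁ := by
          rw [← Real.rpow_mul hr₀.le, one_div_mul_cancel hβ₁pos.ne', Real.rpow_one]
      _ ≤ L ^ β₁ := Real.rpow_le_rpow hr₁.le (by linarith) hβ₁pos.le
  have hLE : (0:ℝ) < L ^ E := Real.rpow_pos_of_pos hL0 _
  -- σ-finiteness of ν
  haveI : SigmaFinite ν := by
    refine Measure.sigmaFinite_of_countable (Set.countable_range (cubeP d₁ d₂)) ?_ ?_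
    · rintro t ⟨j, rfl⟩; exact lt_of_le_of_lt (hν j) one_lt_top
    · rw [Set.sUnion_range]
      refine Set.eq_univ_of_forall fun x => Set.mem_iUnion.2 ?_
      refine ⟨(fun i => ⌊x.1 i + 1/2⌋, fun i => ⌊x.2 i + 1/2⌋), fun i => ⟨?_, ?_⟩,
        fun i => ⟨?_, ?_⟩⟩
      · show (⌊x.1 i + 1/2⌋ : ℝ) - 1/2 ≤ x.1 i
        linarith [Int.floor_le (x.1 i + 1/2)]
      · show x.1 i < (⌊x.1 i + 1/2⌋ : ℝ) + 1/2
        linarith [Int.lt_floor_add_one (x.1 i + 1/2)]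
      · show (⌊x.2 i + 1/2⌋ : ℝ) - 1/2 ≤ x.2 i
        linarith [Int.floor_le (x.2 i + 1/2)]
      · show x.2 i < (⌊x.2 i + 1/2⌋ : ℝ) + 1/2
        linarith [Int.lt_floor_add_one (x.2 i + 1/2)]
  set A : Set ((Fin d₁ → ℝ) × (Fin d₂ → ℝ)) :=
    {y | L ^ β₁ < ‖y.1‖ ∧ L ^ β₂ < ‖y.2‖} with hAdef
  set S : Set ((Fin d₁ → ℤ) × (Fin d₂ → ℤ)) :=
    {j | (2 * L ^ β₁ < ‖j.1‖ ∧ ‖j.1‖ ≤ 4 * L ^ β₁) ∧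
         (2 * L ^ β₂ < ‖j.2‖ ∧ ‖j.2‖ ≤ 4 * L ^ β₂)} with hSdef
  set Λt : Set ((Fin d₁ → ℝ) × (Fin d₂ → ℝ)) := ⋃ j ∈ S, cubeP d₁ d₂ j with hΛtdef
  have hΛtmeas : MeasurableSet Λt :=
    MeasurableSet.biUnion (Set.to_countable S) fun j _ => measurableSet_cubeP j
  have hΛ₀meas : MeasurableSet (cubeP d₁ d₂ (0 : (Fin d₁ → ℤ) × (Fin d₂ → ℤ))) :=
    measurableSet_cubeP 0
  -- facts about points of Λt
  have hyfacts : ∀ y ∈ Λt, (L ^ β₁ < ‖y.1‖ ∧ L ^ β₂ < ‖y.2‖) ∧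
      ‖y.1‖ ≤ 5 * L ^ β₁ ∧ ‖y.2‖ ≤ 5 * L ^ β₂ := by
    intro y hy
    simp only [hΛtdef, Set.mem_iUnion, exists_prop] at hy
    obtain ⟨j, hjS, hyc⟩ := hy
    obtain ⟨⟨hj1l, hj1u⟩, hj2l, hj2u⟩ := hjS
    obtain ⟨c1l, c1u⟩ := cube_norm_bounds hyc.1
    obtain ⟨c2l, c2u⟩ := cube_norm_bounds hyc.2
    exact ⟨⟨by linarith, by linarith⟩, by linarith, by linarith⟩
  have hAsub : Λt ⊆ A := fun y hy => (hyfacts y hy).1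
  -- key pointwise lower bound
  have hkey : ∀ y ∈ Λt,
      ENNReal.ofReal (f_u / (C * L ^ E)) ≤
        ∫⁻ z in cubeP d₁ d₂ 0, ENNReal.ofReal (f (z - y)) := by
    intro y hy
    obtain ⟨⟨h1, h2⟩, h3, h4⟩ := hyfacts y hy
    have hy1pos : 0 < ‖y.1‖ := lt_trans (Real.rpow_pos_of_pos hL0 β₁) h1
    have hy2pos : 0 < ‖y.2‖ := lt_trans (Real.rpow_pos_of_pos hL0 β₂) h2
    have hmax : r₀ ≤ max ‖y.1‖ ‖y.2‖ := le_max_of_le_left (le_of_lt (lt_of_le_of_lt hLβ₁r h1))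
    refine le_trans ?_ (h_low y hmax)
    apply ENNReal.ofReal_le_ofReal
    have hden_pos : 0 < ‖y.1‖ ^ α₁ + ‖y.2‖ ^ α₂ :=
      add_pos (Real.rpow_pos_of_pos hy1pos _) (Real.rpow_pos_of_pos hy2pos _)
    have hb1 : ‖y.1‖ ^ α₁ ≤ (5:ℝ) ^ α₁ * L ^ E := by
      calc ‖y.1‖ ^ α₁ ≤ (5 * L ^ β₁) ^ α₁ := Real.rpow_le_rpow (norm_nonneg _) h3 hα₁.le
        _ = (5:ℝ) ^ α₁ * (L ^ β₁) ^ α₁ :=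
            Real.mul_rpow (by norm_num) (Real.rpow_nonneg hL0.le _)
        _ = (5:ℝ) ^ α₁ * L ^ E := by rw [← Real.rpow_mul hL0.le, hβ₁E]
    have hb2 : ‖y.2‖ ^ α₂ ≤ (5:ℝ) ^ α₂ * L ^ E := by
      calc ‖y.2‖ ^ α₂ ≤ (5 * L ^ β₂) ^ α₂ := Real.rpow_le_rpow (norm_nonneg _) h4 hα₂.le
        _ = (5:ℝ) ^ α₂ * (L ^ β₂) ^ α₂ :=
            Real.mul_rpow (by norm_num) (Real.rpow_nonneg hL0.le _)
        _ = (5:ℝ) ^ α₂ * L ^ E := by rw [← Real.rpow_mul hL0.le, hβ₂E]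
    have hden_le : ‖y.1‖ ^ α₁ + ‖y.2‖ ^ α₂ ≤ C * L ^ E := by
      calc ‖y.1‖ ^ α₁ + ‖y.2‖ ^ α₂ ≤ (5:ℝ) ^ α₁ * L ^ E + (5:ℝ) ^ α₂ * L ^ E :=
            add_le_add hb1 hb2
        _ = C * L ^ E := by rw [hCdef]; ring
    gcongr
  -- measurability of the integrand on the product space
  have hgmeas : Measurable fun p : ((Fin d₁ → ℝ) × (Fin d₂ → ℝ)) × ((Fin d₁ → ℝ) × (Fin d₂ → ℝ)) =>
      ENNReal.ofReal (f (p.1 - p.2)) :=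
    ENNReal.measurable_ofReal.comp (hf_meas.comp (measurable_fst.sub measurable_snd))
  have hswap : (∫⁻ y in Λt, ∫⁻ z in cubeP d₁ d₂ 0, ENNReal.ofReal (f (z - y)) ∂volume ∂ν)
      = ∫⁻ z in cubeP d₁ d₂ 0, ∫⁻ y in Λt, ENNReal.ofReal (f (z - y)) ∂ν ∂volume := by
    exact lintegral_lintegral_swap
      (f := fun y z => ENNReal.ofReal (f (z - y)))
      ((hgmeas.comp measurable_swap).aemeasurable)
  have hVmeas : Measurable fun z => ∫⁻ y in A, ENNReal.ofReal (f (z - y)) ∂ν :=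
    Measurable.lintegral_prod_right (f := fun z y => ENNReal.ofReal (f (z - y))) hgmeas
  calc ENNReal.ofReal (s * f_u / C * L ^ (-E)) * ν Λt
      = ENNReal.ofReal s * (ENNReal.ofReal (f_u / (C * L ^ E)) * ν Λt) := by
        rw [← mul_assoc, ← ENNReal.ofReal_mul hs.le]
        congr 2
        rw [Real.rpow_neg hL0.le]
        field_simp
    _ = ENNReal.ofReal s * ∫⁻ _ in Λt, ENNReal.ofReal (f_u / (C * L ^ E)) ∂ν := by
        rw [setLIntegral_const]
    _ ≤ ENNReal.ofReal s *
        ∫⁻ y in Λt, (∫⁻ z in cubeP d₁ d₂ 0, ENNReal.ofReal (f (z - y))) ∂ν :=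
        mul_le_mul_right
          (lintegral_mono_ae ((ae_restrict_iff' hΛtmeas).2 (ae_of_all _ hkey))) _
    _ = ENNReal.ofReal s *
        ∫⁻ z in cubeP d₁ d₂ 0, ∫⁻ y in Λt, ENNReal.ofReal (f (z - y)) ∂ν := by
        rw [hswap]
    _ ≤ ENNReal.ofReal s *
        ∫⁻ z in cubeP d₁ d₂ 0, ∫⁻ y in A, ENNReal.ofReal (f (z - y)) ∂ν :=
        mul_le_mul_right
          (lintegral_mono fun z =>
            lintegral_mono' (Measure.restrict_mono hAsub le_rfl) le_rfl) _
    _ = ∫⁻ z in cubeP d₁ d₂ 0,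
          (∫⁻ y in A, ENNReal.ofReal (f (z - y)) ∂ν) * ENNReal.ofReal s := by
        rw [mul_comm]
        exact (lintegral_mul_const _ hVmeas).symm
    _ ≤ ∫⁻ z in cubeP d₁ d₂ 0,
          (∫⁻ y in A, ENNReal.ofReal (f (z - y)) ∂ν) * ENNReal.ofReal (ψ z ^ 2) :=
        lintegral_mono_ae ((ae_restrict_iff' hΛ₀meas).2 (ae_of_all _ fun z hz =>
          mul_le_mul_right (ENNReal.ofReal_le_ofReal (hψ_inf z hz)) _))
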